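/- Suppose B̄, B̄_S, B̄_N, Ḡ_S, Ḡ_N : ℝ → ℝ satisfy the modulated system: B̄' + 4(B̄_N Ḡ_N + B̄_S Ḡ_S)/Ω² = 0; B̄_S' + f B̄_N + (B̄ Ḡ_S - 2c₀ B̄_N)/Ω² = 0; B̄_N' - f B̄_S + (B̄ Ḡ_N + 2c₀ B̄_S)/Ω² = 0, where Ω : ℝ → ℝ is positive. Then B̄_S² + B̄_N² - (1/4)B̄² is constant. -/

import Mathlib

/-- the integral of motion (5.3.14): B̄_S² + B̄_N² - (1/4)B̄² is constant. -/
theorem stmt5 (f c₀ : ℝ) (Bb BbS BbN GbS GbN Ω : ℝ → ℝ) (hΩpos : ∀ t, 0 < Ω t)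
    (hBb : ∀ t, HasDerivAt Bb (-(4 * (BbN t * GbN t + BbS t * GbS t) / (Ω t) ^ 2)) t)
    (hBbS : ∀ t, HasDerivAt BbS (-(f * BbN t + (Bb t * GbS t - 2 * c₀ * BbN t) / (Ω t) ^ 2)) t)
    (hBbN : ∀ t, HasDerivAt BbN (-(-(f * BbS t) + (Bb t * GbN t + 2 * c₀ * BbS t) / (Ω t) ^ 2)) t) :
    ∃ c : ℝ, ∀ t, (BbS t) ^ 2 + (BbN t) ^ 2 - (1 / 4) * (Bb t) ^ 2 = c := by
  have key : ∀ t, HasDerivAt (fun t => (BbS t) ^ 2 + (BbN t) ^ 2 - (1 / 4) * (Bb t) ^ 2) 0 t := by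
    intro t
    have h := (((hBbS t).pow 2).add ((hBbN t).pow 2)).sub (((hBb t).pow 2).const_mul (1/4 : ℝ))
    refine HasDerivAt.congr_deriv h ?_
    have hΩ : (Ω t) ^ 2 ≠ 0 := pow_ne_zero 2 (hΩpos t).ne'
    field_simp
    ring
  refine ⟨BbS 0 ^ 2 + BbN 0 ^ 2 - (1/4) * Bb 0 ^ 2, fun t => ?_⟩
  exact is_const_of_deriv_eq_zero (fun x => (key x).differentiableAt)
    (fun x => (key x).deriv) t 0
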